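/- Let n = 2m+1 with m ≥ 1 and let p ∈ S(n,0). Then |p|_0 = (1/n)^{1/(n-1)} if and only if p(z) = z^{2m+1} + λ e^{iθ} z^{m+1} + e^{2iθ} z for some λ, θ ∈ ℝ with |λ| ≤ 2√(2m+1)/(m+1). Consequently the 0-maximal polynomials of odd degree n = 2m+1 are exactly these polynomials. -/

import Mathlib

open Polynomial Complex


noncomputable def rho (n : ℕ) : ℝ := ((1 : ℝ) / n) ^ ((1 : ℝ) / ((n : ℝ) - 1))

lemma rho_pos {n : ℕ} (hn : 2 ≤ n) : 0 < rho n := by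
  have : (0:ℝ) < 1 / n := by positivity
  exact Real.rpow_pos_of_pos this _

lemma rho_pow {m n : ℕ} (hm : 1 ≤ m) (hn : n = 2 * m + 1) :
    (rho n) ^ (2 * m) = 1 / n := by
  have h1 : ((n : ℝ) - 1) = (2 * m : ℕ) := by subst hn; push_cast; ring
  have h2 : (0:ℝ) < 1 / n := by
    have : 0 < n := by omega
    positivity
  have h3 : ((2 * m : ℕ) : ℝ) ≠ 0 := by
    have : 0 < 2 * m := by omega
    positivity
  rw [rho, ← Real.rpow_natCast (((1:ℝ)/n) ^ ((1 : ℝ) / ((n : ℝ) - 1))) (2*m),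
    ← Real.rpow_mul h2.le, h1, one_div_mul_cancel h3, Real.rpow_one]

lemma abs_eq_rho_of_pow {m n : ℕ} (hm : 1 ≤ m) (hn : n = 2 * m + 1) {t : ℝ} (ht : 0 ≤ t)
    (h : t ^ (2 * m) = 1 / n) : t = rho n := by
  have h2m : (0:ℝ) < ((2*m : ℕ) : ℝ) := by
    have : 0 < 2 * m := by omega
    exact_mod_cast this
  have h1 : ((n : ℝ) - 1) = (2 * m : ℕ) := by subst hn; push_cast; ring
  have : t = (t ^ (2*m) : ℝ) ^ ((1:ℝ)/(2*m : ℕ)) := by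
    rw [← Real.rpow_natCast t (2*m), ← Real.rpow_mul ht]
    rw [mul_one_div, div_self (by positivity), Real.rpow_one]
  rw [this, h, rho, h1]


lemma ms_prod_ge (c : ℝ) (hc : 0 < c) :
    ∀ (M : Multiset ℝ), (∀ x ∈ M, c ≤ x) → c ^ Multiset.card M ≤ M.prod := by
  intro M
  induction M using Multiset.induction_on with
  | empty => simp
  | cons a M ih =>
    intro h
    rw [Multiset.prod_cons, Multiset.card_cons, pow_succ, mul_comm (c ^ Multiset.card M) c]
    have ha : c ≤ a := h a (Multiset.mem_cons_self a M)
    have hM : c ^ Multiset.card M ≤ M.prod := ih fun x hx => h x (Multiset.mem_cons_of_mem hx)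
    have h0 : (0:ℝ) ≤ c ^ Multiset.card M := by positivity
    exact mul_le_mul ha hM h0 (le_trans hc.le ha)

lemma ms_prod_eq_forall (c : ℝ) (hc : 0 < c) :
    ∀ (M : Multiset ℝ), (∀ x ∈ M, c ≤ x) → M.prod = c ^ Multiset.card M →
      ∀ x ∈ M, x = c := by
  intro M
  induction M using Multiset.induction_on with
  | empty => simp
  | cons a M ih =>
    intro h hprod x hx
    have ha : c ≤ a := h a (Multiset.mem_cons_self a M)
    have hM' : ∀ y ∈ M, c ≤ y := fun y hy => h y (Multiset.mem_cons_of_mem hy)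
    have hMge : c ^ Multiset.card M ≤ M.prod := ms_prod_ge c hc M hM'
    rw [Multiset.prod_cons, Multiset.card_cons, pow_succ, mul_comm (c ^ Multiset.card M) c] at hprod
    have hcpow : (0:ℝ) < c ^ Multiset.card M := by positivity
    have haeq : a = c := by
      by_contra hne
      have hlt : c < a := lt_of_le_of_ne ha (Ne.symm hne)
      have h1 : c * c ^ Multiset.card M < a * c ^ Multiset.card M :=
        mul_lt_mul_of_pos_right hlt hcpow
      have h2 : a * c ^ Multiset.card M ≤ a * M.prod :=
        mul_le_mul_of_nonneg_left hMge (le_trans hc.le ha)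
      linarith [hprod]
    rcases Multiset.mem_cons.mp hx with h | h
    · rw [h, haeq]
    · have hMeq : M.prod = c ^ Multiset.card M := by
        rw [haeq] at hprod
        exact mul_left_cancel₀ hc.ne' hprod
      exact ih hM' hMeq x h

lemma ms_prod_le_one :
    ∀ (M : Multiset ℝ), (∀ x ∈ M, 0 ≤ x ∧ x ≤ 1) → M.prod ≤ 1 := by
  intro M
  induction M using Multiset.induction_on with
  | empty => simp
  | cons a M ih =>
    intro h
    rw [Multiset.prod_cons]
    have ha := h a (Multiset.mem_cons_self a M)
    have hM := ih fun x hx => h x (Multiset.mem_cons_of_mem hx)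
    have hM0 : 0 ≤ M.prod := Multiset.prod_nonneg fun x hx => (h x (Multiset.mem_cons_of_mem hx)).1
    calc a * M.prod ≤ 1 * 1 := mul_le_mul ha.2 hM hM0 zero_le_one
      _ = 1 := one_mul 1

lemma ms_prod_eq_one_forall :
    ∀ (M : Multiset ℝ), (∀ x ∈ M, 0 ≤ x ∧ x ≤ 1) → M.prod = 1 → ∀ x ∈ M, x = 1 := by
  intro M
  induction M using Multiset.induction_on with
  | empty => simp
  | cons a M ih =>
    intro h hprod x hx
    have ha := h a (Multiset.mem_cons_self a M)
    have hM' : ∀ y ∈ M, 0 ≤ y ∧ y ≤ 1 := fun y hy => h y (Multiset.mem_cons_of_mem hy)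
    have hMle : M.prod ≤ 1 := ms_prod_le_one M hM'
    have hM0 : 0 ≤ M.prod := Multiset.prod_nonneg fun y hy => (hM' y hy).1
    rw [Multiset.prod_cons] at hprod
    have haeq : a = 1 := by nlinarith [ha.1, ha.2]
    rcases Multiset.mem_cons.mp hx with h1 | h1
    · rw [h1, haeq]
    · have : M.prod = 1 := by rw [haeq, one_mul] at hprod; exact hprod
      exact ih hM' this x h1

/-- quadratic lemma -/
lemma quad_normSq {N c : ℝ} (hN : 0 < N) (hc : c ^ 2 ≤ 4 * N) {v : ℂ}
    (h : (N : ℂ) * v ^ 2 + (c : ℂ) * v + 1 = 0) : Complex.normSq v = 1 / N := by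
  have hre := congrArg Complex.re h
  have him := congrArg Complex.im h
  simp [Complex.add_re, Complex.add_im, Complex.mul_re, Complex.mul_im, pow_two] at hre him
  set x := v.re
  set y := v.im
  have hre' : N * (x * x - y * y) + c * x + 1 = 0 := by
    push_cast at hre; nlinarith [hre]
  have him' : y * (2 * N * x + c) = 0 := by
    push_cast at him; nlinarith [him]
  rw [Complex.normSq_apply]
  rcases mul_eq_zero.mp him' with hy | hx
  · -- y = 0
    have hx0 : N * (x * x) + c * x + 1 = 0 := by rw [hy] at hre'; nlinarith [hre']
    have key : (2 * N * x + c) ^ 2 = c ^ 2 - 4 * N := by nlinarith [hx0]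
    have h1 : (2 * N * x + c) ^ 2 = 0 := le_antisymm (by linarith [key]) (sq_nonneg _)
    have h2 : 2 * N * x + c = 0 := by nlinarith [h1]
    have hc4 : c ^ 2 = 4 * N := by nlinarith [key, h1]
    have : x * x + y * y = 1 / N := by
      rw [hy]; field_simp; nlinarith [h2, hc4]
    exact this
  · -- 2Nx + c = 0
    have hcx : c = -(2 * N * x) := by linarith [hx]
    rw [hcx] at hre'
    have : x * x + y * y = 1 / N := by field_simp; nlinarith [hre']
    exact this


lemma prodXC_monic (M : Multiset ℂ) : ((M.map fun w => X - C w).prod).Monic :=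
  monic_multiset_prod_of_monic _ _ fun w _ => monic_X_sub_C w

lemma prodXC_natDegree (M : Multiset ℂ) :
    ((M.map fun w => X - C w).prod).natDegree = Multiset.card M :=
  natDegree_multiset_prod_X_sub_C_eq_card M

/-- key reflection identity for coefficients of polynomials with all roots on circle radius r -/
lemma coeff_reflect (r : ℝ) (hr : 0 < r) :
    ∀ (M : Multiset ℂ), (∀ w ∈ M, ‖w‖ = r) → ∀ k, k ≤ Multiset.card M →
      ((r : ℂ) ^ 2) ^ k * ((M.map fun w => X - C w).prod).coeff k =
        ((M.map fun w => X - C w).prod).coeff 0 *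
          (starRingEnd ℂ) (((M.map fun w => X - C w).prod).coeff (Multiset.card M - k)) := by
  intro M
  induction M using Multiset.induction_on with
  | empty =>
    intro _ k hk
    simp only [Multiset.card_zero, Nat.le_zero] at hk
    subst hk
    simp
  | cons a M ih =>
    intro habs k hk
    have haM : ‖a‖ = r := habs a (Multiset.mem_cons_self a M)
    have hM' : ∀ w ∈ M, ‖w‖ = r := fun w hw => habs w (Multiset.mem_cons_of_mem hw)
    set g : Polynomial ℂ := (M.map fun w => X - C w).prod with hg
    have hfg : ((a ::ₘ M).map fun w => X - C w).prod = (X - C a) * g := by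
      rw [Multiset.map_cons, Multiset.prod_cons]
    set d' : ℕ := Multiset.card M with hd'
    have hcard : Multiset.card (a ::ₘ M) = d' + 1 := by rw [Multiset.card_cons]
    rw [hfg, hcard]
    have hgmonic : g.Monic := prodXC_monic M
    have hgdeg : g.natDegree = d' := prodXC_natDegree M
    have hgtop : g.coeff d' = 1 := by
      rw [← hgdeg]; exact hgmonic.coeff_natDegree
    have haR : a * (starRingEnd ℂ) a = ((r:ℂ))^2 := by
      rw [Complex.mul_conj]
      rw [Complex.normSq_eq_norm_sq, haM]
      push_cast
      ring
    -- coefficient expansion of (X - C a) * g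
    have hcoeff : ∀ j : ℕ, ((X - C a) * g).coeff j =
        (if j = 0 then 0 else g.coeff (j - 1)) - a * g.coeff j := by
      intro j
      rw [sub_mul, Polynomial.coeff_sub, Polynomial.coeff_C_mul]
      congr 1
      cases j with
      | zero => simp [Polynomial.mul_coeff_zero]
      | succ i => simp [Polynomial.coeff_X_mul]
    rcases Nat.eq_zero_or_pos k with hk0 | hkpos
    · -- k = 0
      subst hk0
      rw [hcoeff 0, hcoeff (d' + 1 - 0)]
      have : d' + 1 - 0 = d' + 1 := rfl
      rw [this]
      have hgd1 : g.coeff (d' + 1) = 0 := by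
        apply Polynomial.coeff_eq_zero_of_natDegree_lt
        rw [hgdeg]; omega
      simp [hgd1, hgtop]
    rcases Nat.lt_or_ge k (d' + 1) with hklt | hkeq
    · -- 1 ≤ k ≤ d'
      have hkd' : k ≤ d' := by omega
      have hk1 : k - 1 ≤ d' := by omega
      have ih1 := ih hM' (k - 1) hk1
      have ih2 := ih hM' k hkd'
      rw [hcoeff k, hcoeff (d' + 1 - k)]
      have hne : k ≠ 0 := by omega
      have hne' : d' + 1 - k ≠ 0 := by omega
      rw [if_neg hne, if_neg hne']
      have e1 : d' - (k - 1) = d' + 1 - k := by omega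
      have e2 : d' + 1 - k - 1 = d' - k := by omega
      rw [e1] at ih1
      rw [e2]
      -- ih1 : R^(k-1) * g.coeff (k-1) = g.coeff 0 * conj (g.coeff (d'+1-k))
      -- ih2 : R^k * g.coeff k = g.coeff 0 * conj (g.coeff (d'-k))
      have hpow : ((r:ℂ)^2) ^ k = ((r:ℂ)^2) ^ (k-1) * ((r:ℂ)^2) := by
        rw [← pow_succ]; congr 1; omega
      rw [map_sub, map_mul, hcoeff 0, if_pos rfl]
      -- goal: R^k * (g.coeff (k-1) - a * g.coeff k)
      --      = (0 - a * g.coeff 0) * (conj (g.coeff (d'-k)) - conj a * conj (g.coeff (d'+1-k)))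
      calc ((r:ℂ)^2) ^ k * (g.coeff (k-1) - a * g.coeff k)
          = ((r:ℂ)^2) * (((r:ℂ)^2) ^ (k-1) * g.coeff (k-1)) - a * (((r:ℂ)^2) ^ k * g.coeff k) := by
            rw [hpow]; ring
        _ = ((r:ℂ)^2) * (g.coeff 0 * (starRingEnd ℂ) (g.coeff (d'+1-k)))
            - a * (g.coeff 0 * (starRingEnd ℂ) (g.coeff (d'-k))) := by rw [ih1, ih2]
        _ = (0 - a * g.coeff 0) *
            ((starRingEnd ℂ) (g.coeff (d'-k)) - (starRingEnd ℂ) a * (starRingEnd ℂ) (g.coeff (d'+1-k))) := by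
            rw [← haR]; ring
    · -- k = d' + 1
      have hktop : k = d' + 1 := by omega
      subst hktop
      have htop : ((X - C a) * g).coeff (d' + 1) = 1 := by
        have hmono : ((X - C a) * g).Monic := (monic_X_sub_C a).mul hgmonic
        have : ((X - C a) * g).natDegree = d' + 1 := by
          rw [Polynomial.natDegree_mul (X_sub_C_ne_zero a) hgmonic.ne_zero,
            natDegree_X_sub_C, hgdeg]; omega
        rw [← this]; exact hmono.coeff_natDegree
      rw [htop]
      have hsub : d' + 1 - (d' + 1) = 0 := by omega
      rw [hsub]
      rw [hcoeff 0, if_pos rfl]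
      have ihtop := ih hM' d' le_rfl
      rw [hgtop, Nat.sub_self] at ihtop
      -- ihtop : R^d' * 1 = g.coeff 0 * conj (g.coeff 0)
      rw [mul_one] at ihtop
      rw [map_sub, map_mul]
      simp only [map_zero, zero_sub, mul_neg, neg_mul]
      rw [mul_one, pow_succ]
      rw [ihtop]
      rw [← haR]
      ring



section Phi

variable (Mr N : ℝ)

noncomputable def phi (x : ℝ) : ℝ :=
  Mr * Real.log x + (Mr + 1 - x) * Real.log N - Mr * Real.log (N + 1 - x)

lemma phi_hasDeriv (hMr : 0 < Mr) (hN : 0 < N) {x : ℝ} (hx : 0 < x) (hx2 : x < N + 1) :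
    HasDerivAt (phi Mr N) (Mr * x⁻¹ - Real.log N + Mr * (N + 1 - x)⁻¹) x := by
  have hx3 : (0:ℝ) < N + 1 - x := by linarith
  have d1 : HasDerivAt (fun y : ℝ => Mr * Real.log y) (Mr * x⁻¹) x :=
    (Real.hasDerivAt_log hx.ne').const_mul Mr
  have daff : HasDerivAt (fun y : ℝ => N + 1 - y) (-1 : ℝ) x := by
    simpa using (hasDerivAt_id' x).const_sub (N+1)
  have d3 : HasDerivAt (fun y : ℝ => Mr * Real.log (N + 1 - y)) (Mr * ((N + 1 - x)⁻¹ * (-1))) x := by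
    exact ((Real.hasDerivAt_log hx3.ne').comp x daff).const_mul Mr
  have d2 : HasDerivAt (fun y : ℝ => (Mr + 1 - y) * Real.log N) (-Real.log N) x := by
    have : HasDerivAt (fun y : ℝ => Mr + 1 - y) (-1 : ℝ) x := by
      simpa using (hasDerivAt_id' x).const_sub (Mr+1)
    simpa using this.mul_const (Real.log N)
  have := (d1.add d2).sub d3
  exact this.congr_deriv (by ring)

lemma phi_deriv2 (hMr : 0 < Mr) (hN : 0 < N) {x : ℝ} (hx : 0 < x) (hx2 : x < N + 1) :
    HasDerivAt (fun y => Mr * y⁻¹ - Real.log N + Mr * (N + 1 - y)⁻¹)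
      (Mr * (-(x^2)⁻¹) + Mr * ((N + 1 - x)^2)⁻¹) x := by
  have hx3 : (0:ℝ) < N + 1 - x := by linarith
  have d1 : HasDerivAt (fun y : ℝ => Mr * y⁻¹) (Mr * (-(x^2)⁻¹)) x :=
    (hasDerivAt_inv hx.ne').const_mul Mr
  have daff : HasDerivAt (fun y : ℝ => N + 1 - y) (-1 : ℝ) x := by
    simpa using (hasDerivAt_id' x).const_sub (N+1)
  have d3 : HasDerivAt (fun y : ℝ => Mr * (N + 1 - y)⁻¹) (Mr * (-((N+1-x)^2)⁻¹ * (-1))) x :=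
    ((hasDerivAt_inv hx3.ne').comp x daff).const_mul Mr
  have := (d1.sub (hasDerivAt_const x (Real.log N))).add d3
  exact this.congr_deriv (by ring)

lemma phi_strictConcave (hMr : 0 < Mr) (hN : N = 2 * Mr + 1) :
    StrictConcaveOn ℝ (Set.Icc 1 (Mr + 1)) (phi Mr N) := by
  have hN0 : 0 < N := by rw [hN]; linarith
  have hsub : Set.Icc (1:ℝ) (Mr + 1) ⊆ {x : ℝ | 0 < x ∧ x < N + 1} := by
    intro x hx
    constructor
    · linarith [hx.1]
    · rw [hN]; linarith [hx.2]
  have hopen : IsOpen {x : ℝ | 0 < x ∧ x < N + 1} :=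
    (isOpen_lt continuous_const continuous_id).inter (isOpen_lt continuous_id continuous_const)
  apply strictConcaveOn_of_deriv2_neg (convex_Icc _ _)
  · intro x hx
    exact ((phi_hasDeriv Mr N hMr hN0 (hsub hx).1 (hsub hx).2).continuousAt).continuousWithinAt
  · intro x hx
    rw [interior_Icc] at hx
    have hxU : 0 < x ∧ x < N + 1 := hsub (Set.mem_Icc_of_Ioo hx)
    have heq : deriv (phi Mr N) =ᶠ[nhds x]
        (fun y => Mr * y⁻¹ - Real.log N + Mr * (N + 1 - y)⁻¹) := by
      filter_upwards [hopen.mem_nhds hxU] with y hy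
      exact (phi_hasDeriv Mr N hMr hN0 hy.1 hy.2).deriv
    have h2 : deriv (deriv (phi Mr N)) x =
        Mr * (-(x^2)⁻¹) + Mr * ((N + 1 - x)^2)⁻¹ := by
      rw [heq.deriv_eq]
      exact (phi_deriv2 Mr N hMr hN0 hxU.1 hxU.2).deriv
    have hiter : deriv^[2] (phi Mr N) x = deriv (deriv (phi Mr N)) x := by
      simp [Function.iterate_succ, Function.iterate_one]
    rw [hiter, h2]
    have hx1 : (1:ℝ) < x := hx.1
    have hxm : x < Mr + 1 := hx.2
    have hlt : x < N + 1 - x := by rw [hN]; linarith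
    have hxpos : (0:ℝ) < x := by linarith
    have h3 : x^2 < (N + 1 - x)^2 := by nlinarith
    have h4 : ((N + 1 - x)^2)⁻¹ < (x^2)⁻¹ := by
      apply inv_strictAnti₀ (by positivity) h3
    nlinarith [h4]

lemma phi_one (hN : 0 < N) : phi Mr N 1 = 0 := by
  have : N + 1 - 1 = N := by ring
  simp [phi, this]

lemma phi_top (hMr : 0 < Mr) (hN : N = 2 * Mr + 1) : phi Mr N (Mr + 1) = 0 := by
  have : N + 1 - (Mr + 1) = Mr + 1 := by rw [hN]; ring
  simp [phi, this]

lemma phi_pos (hMr : 0 < Mr) (hN : N = 2 * Mr + 1) {x : ℝ} (hx1 : 1 < x) (hx2 : x < Mr + 1) :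
    0 < phi Mr N x := by
  have hcc := phi_strictConcave Mr N hMr hN
  have hN0 : 0 < N := by rw [hN]; linarith
  set a : ℝ := (Mr + 1 - x) / Mr
  set b : ℝ := (x - 1) / Mr
  have ha : 0 < a := by apply div_pos; linarith; exact hMr
  have hb : 0 < b := by apply div_pos; linarith; exact hMr
  have hab : a + b = 1 := by
    show (Mr + 1 - x) / Mr + (x - 1) / Mr = 1
    field_simp
    ring
  have hxc : a • (1:ℝ) + b • (Mr + 1) = x := by
    show a * 1 + b * (Mr + 1) = x
    show (Mr + 1 - x) / Mr * 1 + (x - 1) / Mr * (Mr + 1) = x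
    field_simp
    ring
  have h1m : (1:ℝ) ∈ Set.Icc (1:ℝ) (Mr + 1) := by constructor <;> [rfl; linarith]
  have h2m : (Mr + 1) ∈ Set.Icc (1:ℝ) (Mr + 1) := by constructor <;> [linarith; rfl]
  have hne : (1:ℝ) ≠ Mr + 1 := by linarith
  have := hcc.2 h1m h2m hne ha hb hab
  rw [hxc, phi_one Mr N hN0, phi_top Mr N hMr hN] at this
  simpa using this

lemma phi_antisym (hMr : 0 < Mr) (hN : N = 2 * Mr + 1) (x : ℝ) :
    phi Mr N x + phi Mr N (N + 1 - x) = 0 := by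
  have h1 : N + 1 - (N + 1 - x) = x := by ring
  simp only [phi, h1]
  rw [hN]
  ring

end Phi

lemma rho_pos' {n : ℕ} (hn : 1 ≤ n) : 0 < rho n := by
  have : (0:ℝ) < 1 / n := by positivity
  exact Real.rpow_pos_of_pos this _

lemma key_ne (m : ℕ) (hm : 1 ≤ m) (j : ℕ) (hj2 : 2 ≤ j) (hj : j ≤ 2 * m) (hjm : j ≠ m + 1) :
    ((rho (2 * m + 1)) ^ 2) ^ (j - 1) * (j : ℝ) * ((2 * m + 1 : ℕ) : ℝ) ≠
      ((2 * m + 1 : ℕ) : ℝ) + 1 - (j : ℝ) := by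
  intro heq
  set Mr : ℝ := (m : ℝ) with hMrdef
  have hMr : 0 < Mr := by
    have : (0:ℕ) < m := hm
    rw [hMrdef]
    exact_mod_cast this
  set N : ℝ := ((2 * m + 1 : ℕ) : ℝ) with hNdef
  have hNM : N = 2 * Mr + 1 := by rw [hNdef, hMrdef]; push_cast; ring
  have hN0 : (0:ℝ) < N := by rw [hNM]; linarith
  have hN1 : (1:ℝ) < N := by rw [hNM]; linarith
  set jr : ℝ := (j : ℝ) with hjrdef
  have hjr2 : (2:ℝ) ≤ jr := by rw [hjrdef]; exact_mod_cast hj2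
  have hjrle : jr ≤ 2 * Mr := by rw [hjrdef, hMrdef]; exact_mod_cast hj
  have hjrne : jr ≠ Mr + 1 := by
    rw [hjrdef, hMrdef]
    intro hcon
    apply hjm
    exact_mod_cast hcon
  set rr : ℝ := rho (2 * m + 1) with hrrdef
  have hrr : 0 < rr := rho_pos' (by omega)
  -- log of rho
  have hlogrho : 2 * Mr * Real.log rr = -Real.log N := by
    have h1 : Real.log rr = (1 / ((((2*m+1:ℕ)):ℝ) - 1)) * Real.log (1 / (((2*m+1:ℕ)):ℝ)) := by
      rw [hrrdef, rho]
      exact Real.log_rpow (by positivity) _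
    have h2 : (((2*m+1:ℕ)):ℝ) - 1 = 2 * Mr := by rw [hMrdef]; push_cast; ring
    have h3 : Real.log (1 / (((2*m+1:ℕ)):ℝ)) = -Real.log N := by
      rw [one_div, Real.log_inv, hNdef]
    rw [h1, h2, h3]
    field_simp
  -- take logs of heq
  have hNj : (0:ℝ) < N + 1 - jr := by rw [hNM]; linarith
  have hrpow : (0:ℝ) < (rr ^ 2) ^ (j - 1) := by positivity
  have hjrpos : (0:ℝ) < jr := by linarith
  have hlog := congrArg Real.log heq
  rw [Real.log_mul (by positivity) (by positivity), Real.log_mul (by positivity) (by positivity),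
    Real.log_pow, Real.log_pow] at hlog
  -- hlog : (j-1) * (2 * log rr) + log jr + log N = log (N + 1 - jr)
  have hcast : ((j - 1 : ℕ) : ℝ) = jr - 1 := by
    rw [hjrdef]
    have : 1 ≤ j := by omega
    push_cast [this]
    ring
  rw [hcast] at hlog
  have hphi : phi Mr N jr = 0 := by
    unfold phi
    linear_combination Mr * hlog - (jr - 1) * hlogrho
  rcases Nat.lt_or_ge j (m + 1) with hcase | hcase
  · -- j ≤ m
    have h1 : 1 < jr := by linarith
    have h2 : jr < Mr + 1 := by
      have : (j:ℝ) ≤ (m:ℝ) := by exact_mod_cast Nat.lt_succ_iff.mp hcase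
      rw [hjrdef, hMrdef]; linarith
    have := phi_pos Mr N hMr hNM h1 h2
    linarith [hphi]
  · -- j ≥ m + 2
    have hge : m + 2 ≤ j := by omega
    have h1 : 1 < N + 1 - jr := by rw [hNM]; linarith
    have h2 : N + 1 - jr < Mr + 1 := by
      have : Mr + 2 ≤ jr := by
        rw [hjrdef, hMrdef]
        exact_mod_cast hge
      rw [hNM]; linarith
    have hpos := phi_pos Mr N hMr hNM h1 h2
    have hanti := phi_antisym Mr N hMr hNM jr
    linarith [hphi, hpos, hanti]


/-- The distance `|p|_α` from `α` to the zero set of `p'`. -/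
noncomputable def critDist (p : Polynomial ℂ) (α : ℂ) : ℝ :=
  sInf {r : ℝ | ∃ w : ℂ, (Polynomial.derivative p).eval w = 0 ∧ r = dist α w}

/-- `S_n`: monic complex polynomials of degree `n` with all zeros in the closed unit disk. -/
def Sset (n : ℕ) : Set (Polynomial ℂ) :=
  {p | p.Monic ∧ p.natDegree = n ∧ ∀ z : ℂ, p.eval z = 0 → ‖z‖ ≤ 1}

lemma critSet_bddBelow (p : Polynomial ℂ) :
    BddBelow {r : ℝ | ∃ w : ℂ, (Polynomial.derivative p).eval w = 0 ∧ r = dist 0 w} := by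
  refine ⟨0, fun r hr => ?_⟩
  obtain ⟨w, _, hw⟩ := hr
  rw [hw]; exact dist_nonneg

lemma critDist_le (p : Polynomial ℂ) {w : ℂ} (hw : (Polynomial.derivative p).eval w = 0) :
    critDist p 0 ≤ ‖w‖ := by
  have hmem : ‖w‖ ∈
      {r : ℝ | ∃ w : ℂ, (Polynomial.derivative p).eval w = 0 ∧ r = dist 0 w} := by
    exact ⟨w, hw, by rw [Complex.dist_eq, zero_sub, norm_neg]⟩
  exact csInf_le (critSet_bddBelow p) hmem

lemma critDist_eq_of_const (p : Polynomial ℂ) (c : ℝ)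
    (hex : ∃ w : ℂ, (Polynomial.derivative p).eval w = 0)
    (hall : ∀ w : ℂ, (Polynomial.derivative p).eval w = 0 → ‖w‖ = c) :
    critDist p 0 = c := by
  have hset : {r : ℝ | ∃ w : ℂ, (Polynomial.derivative p).eval w = 0 ∧ r = dist 0 w} = {c} := by
    ext r
    simp only [Set.mem_setOf_eq, Set.mem_singleton_iff]
    constructor
    · rintro ⟨w, hw, rfl⟩
      rw [Complex.dist_eq, zero_sub, norm_neg]
      exact hall w hw
    · rintro rfl
      obtain ⟨w, hw⟩ := hex
      exact ⟨w, hw, by rw [Complex.dist_eq, zero_sub, norm_neg, hall w hw]⟩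
  rw [critDist, hset, csInf_singleton]

lemma card_roots_eq {f : Polynomial ℂ} (hf : f ≠ 0) :
    Multiset.card f.roots = f.natDegree :=
  (Polynomial.splits_iff_card_roots.mp (IsAlgClosed.splits f))

lemma monic_eq_prod {f : Polynomial ℂ} (hf : f.Monic) :
    (f.roots.map fun a => X - C a).prod = f :=
  Polynomial.prod_multiset_X_sub_C_of_monic_of_roots_card_eq hf (card_roots_eq hf.ne_zero)

lemma abs_eval_zero_monic {f : Polynomial ℂ} (hf : f.Monic) :
    ‖f.eval 0‖ = (f.roots.map (fun z => ‖z‖)).prod := by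
  conv_lhs => rw [← monic_eq_prod hf]
  rw [Polynomial.eval_multiset_prod, Multiset.map_map, ← normHom_apply, map_multiset_prod (normHom : ℂ →*₀ ℝ),
    Multiset.map_map]
  apply congrArg
  apply Multiset.map_congr rfl
  intro z _
  simp [norm_neg]

lemma deriv_facts {p : Polynomial ℂ} {n : ℕ} (hmo : p.Monic) (hdeg : p.natDegree = n)
    (hn : 1 ≤ n) :
    (Polynomial.derivative p).natDegree = n - 1 ∧
    (Polynomial.derivative p).coeff (n - 1) = (n : ℂ) ∧
    Polynomial.derivative p ≠ 0 := by
  have htop : p.coeff n = 1 := by rw [← hdeg]; exact hmo.coeff_natDegree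
  have hn1 : n - 1 + 1 = n := by omega
  have hcoeff : (Polynomial.derivative p).coeff (n - 1) = (n : ℂ) := by
    rw [Polynomial.coeff_derivative, hn1, htop, one_mul]
    push_cast [hn1]
    norm_cast
  have hne : ((n : ℂ)) ≠ 0 := Nat.cast_ne_zero.mpr (by omega)
  have hnz : Polynomial.derivative p ≠ 0 := fun h => by
    rw [h, Polynomial.coeff_zero] at hcoeff
    exact hne hcoeff.symm
  have hle : (Polynomial.derivative p).natDegree ≤ n - 1 := by
    have := Polynomial.natDegree_derivative_le p
    rw [hdeg] at this
    exact this
  have hge : n - 1 ≤ (Polynomial.derivative p).natDegree :=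
    Polynomial.le_natDegree_of_ne_zero (hcoeff ▸ hne)
  exact ⟨le_antisymm hle hge, hcoeff, hnz⟩

lemma factor_X {p : Polynomial ℂ} {n : ℕ} (hmo : p.Monic) (hdeg : p.natDegree = n)
    (hn : 1 ≤ n) (h0 : p.eval 0 = 0) :
    ∃ s : Polynomial ℂ, p = X * s ∧ s.Monic ∧ s.natDegree = n - 1 ∧
      (Polynomial.derivative p).eval 0 = s.eval 0 := by
  have hdvd : X ∣ p := Polynomial.X_dvd_iff.mpr (by rw [Polynomial.coeff_zero_eq_eval_zero]; exact h0)
  obtain ⟨s, hs⟩ := hdvd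
  have hsne : s ≠ 0 := by
    intro h
    rw [h, mul_zero] at hs
    exact hmo.ne_zero hs
  have hlc : s.leadingCoeff = 1 := by
    have := congrArg Polynomial.leadingCoeff hs
    rw [Polynomial.leadingCoeff_mul, Polynomial.leadingCoeff_X, one_mul] at this
    rw [← this]
    exact hmo
  have hsdeg : s.natDegree = n - 1 := by
    have := congrArg Polynomial.natDegree hs
    rw [Polynomial.natDegree_mul Polynomial.X_ne_zero hsne, Polynomial.natDegree_X] at this
    omega
  have heval : (Polynomial.derivative p).eval 0 = s.eval 0 := by
    rw [hs, Polynomial.derivative_mul, Polynomial.derivative_X]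
    simp
  exact ⟨s, hs, hlc, hsdeg, heval⟩

lemma s_roots_abs {p s : Polynomial ℂ} {n : ℕ} (hp : p ∈ Sset n) (hs : p = X * s) :
    ∀ z ∈ s.roots, ‖z‖ ≤ 1 := by
  intro z hz
  have hroot : s.eval z = 0 := (Polynomial.mem_roots'.mp hz).2
  apply hp.2.2
  rw [hs, Polynomial.eval_mul, hroot, mul_zero]

lemma abs_eval_zero_general {f : Polynomial ℂ} (hf : f ≠ 0) :
    ‖f.eval 0‖ = ‖f.leadingCoeff‖ * (f.roots.map (fun z => ‖z‖)).prod := by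
  conv_lhs => rw [← Polynomial.C_leadingCoeff_mul_prod_multiset_X_sub_C (card_roots_eq hf)]
  rw [Polynomial.eval_mul, Polynomial.eval_C, norm_mul]
  congr 1
  rw [Polynomial.eval_multiset_prod, Multiset.map_map, ← normHom_apply, map_multiset_prod (normHom : ℂ →*₀ ℝ),
    Multiset.map_map]
  apply congrArg
  apply Multiset.map_congr rfl
  intro z _
  simp [norm_neg]
lemma critDist_le_rho {m n : ℕ} (hm : 1 ≤ m) (hn : n = 2 * m + 1)
    {q : Polynomial ℂ} (hq : q ∈ Sset n) (h0 : q.eval 0 = 0) :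
    critDist q 0 ≤ rho n := by
  have hn2 : 2 ≤ n := by omega
  have hrho : 0 < rho n := rho_pos hn2
  obtain ⟨s, hs, hsmo, hsdeg, heval⟩ := factor_X hq.1 hq.2.1 (by omega) h0
  have hsabs : ‖s.eval 0‖ ≤ 1 := by
    rw [abs_eval_zero_monic hsmo]
    apply ms_prod_le_one
    intro x hx
    rw [Multiset.mem_map] at hx
    obtain ⟨z, hz, rfl⟩ := hx
    exact ⟨norm_nonneg z, s_roots_abs hq hs z hz⟩
  obtain ⟨hddeg, hdcoeff, hdne⟩ := deriv_facts hq.1 hq.2.1 (by omega) (p := q)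
  have hlc : (Polynomial.derivative q).leadingCoeff = (n : ℂ) := by
    rw [Polynomial.leadingCoeff, hddeg]; exact hdcoeff
  have habs0 : ‖(Polynomial.derivative q).eval 0‖ =
      (n : ℝ) * (((Polynomial.derivative q).roots).map (fun z => ‖z‖)).prod := by
    rw [abs_eval_zero_general hdne, hlc, Complex.norm_natCast]
  have hnpos : (0:ℝ) < n := by positivity
  have hprodle : (((Polynomial.derivative q).roots).map (fun z => ‖z‖)).prod ≤ 1 / n := by
    rw [heval] at habs0
    rw [le_div_iff₀ hnpos]
    calc (((Polynomial.derivative q).roots).map (fun z => ‖z‖)).prod * n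
        = (n : ℝ) * (((Polynomial.derivative q).roots).map (fun z => ‖z‖)).prod := by ring
      _ = ‖s.eval 0‖ := habs0.symm
      _ ≤ 1 := hsabs
  have hcard : Multiset.card (((Polynomial.derivative q).roots).map (fun z => ‖z‖)) = 2 * m := by
    rw [Multiset.card_map, card_roots_eq hdne, hddeg]; omega
  have hex : ∃ w ∈ (Polynomial.derivative q).roots, ‖w‖ ≤ rho n := by
    by_contra hcon
    push_neg at hcon
    have hall : ∀ x ∈ ((Polynomial.derivative q).roots).map (fun z => ‖z‖), rho n ≤ x := by
      intro x hx
      rw [Multiset.mem_map] at hx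
      obtain ⟨w, hw, rfl⟩ := hx
      exact (hcon w hw).le
    have hge := ms_prod_ge (rho n) hrho _ hall
    rw [hcard] at hge
    have h1n : (rho n) ^ (2*m) = 1 / n := rho_pow hm hn
    have hprodeq : (((Polynomial.derivative q).roots).map (fun z => ‖z‖)).prod
        = (rho n) ^ Multiset.card (((Polynomial.derivative q).roots).map (fun z => ‖z‖)) := by
      rw [hcard, h1n]
      exact le_antisymm hprodle (h1n ▸ hge)
    have hallEq := ms_prod_eq_forall (rho n) hrho _ hall hprodeq
    have hne0 : ((Polynomial.derivative q).roots).map (fun z => ‖z‖) ≠ 0 := by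
      intro h
      rw [h] at hcard
      simp at hcard
      omega
    obtain ⟨x, hx⟩ := Multiset.exists_mem_of_ne_zero hne0
    have := hallEq x hx
    rw [Multiset.mem_map] at hx
    obtain ⟨w, hw, rfl⟩ := hx
    exact absurd this (ne_of_gt (hcon w hw))
  obtain ⟨w, hw, hwle⟩ := hex
  have hweval : (Polynomial.derivative q).eval w = 0 := (Polynomial.mem_roots'.mp hw).2
  exact (critDist_le q hweval).trans hwle
lemma deriv_form (m : ℕ) (A B : ℂ) :
    Polynomial.derivative (X ^ (2 * m + 1) + C A * X ^ (m + 1) + C B * X) =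
      C ((2 * m + 1 : ℕ) : ℂ) * X ^ (2 * m) + C (((m + 1 : ℕ) : ℂ) * A) * X ^ m + C B := by
  rw [Polynomial.derivative_add, Polynomial.derivative_add, Polynomial.derivative_X_pow,
    Polynomial.derivative_C_mul, Polynomial.derivative_C_mul, Polynomial.derivative_X_pow,
    Polynomial.derivative_X]
  have h1 : 2 * m + 1 - 1 = 2 * m := by omega
  have h2 : m + 1 - 1 = m := by omega
  rw [h1, h2]
  rw [Polynomial.C_mul]
  ring

lemma form_eval (m : ℕ) (A B : ℂ) (w : ℂ) :
    (Polynomial.derivative (X ^ (2 * m + 1) + C A * X ^ (m + 1) + C B * X)).eval w =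
      ((2 * m + 1 : ℕ) : ℂ) * w ^ (2 * m) + ((m + 1 : ℕ) : ℂ) * A * w ^ m + B := by
  rw [deriv_form]
  simp

lemma form_deriv_exists_root (m : ℕ) (hm : 1 ≤ m) (A B : ℂ) :
    ∃ w : ℂ, (Polynomial.derivative (X ^ (2 * m + 1) + C A * X ^ (m + 1) + C B * X)).eval w = 0 := by
  set f := Polynomial.derivative (X ^ (2 * m + 1) + C A * X ^ (m + 1) + C B * X) with hf
  have hcoeff : f.coeff (2 * m) = ((2 * m + 1 : ℕ) : ℂ) := by
    rw [hf, deriv_form]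
    rw [Polynomial.coeff_add, Polynomial.coeff_add, Polynomial.coeff_C_mul,
      Polynomial.coeff_C_mul, Polynomial.coeff_X_pow, Polynomial.coeff_X_pow,
      Polynomial.coeff_C]
    have h1 : 2 * m ≠ m := by omega
    have h2 : 2 * m ≠ 0 := by omega
    simp [h1, h2]
  have hne : ((2 * m + 1 : ℕ) : ℂ) ≠ 0 := Nat.cast_ne_zero.mpr (by omega)
  have hfne : f ≠ 0 := fun h => hne (by rw [h, Polynomial.coeff_zero] at hcoeff; exact hcoeff.symm)
  have hdegpos : 0 < f.natDegree := by
    have := Polynomial.le_natDegree_of_ne_zero (hcoeff ▸ hne)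
    omega
  have hdeg : 0 < f.degree := Polynomial.natDegree_pos_iff_degree_pos.mp hdegpos
  obtain ⟨w, hw⟩ := Complex.exists_root hdeg
  exact ⟨w, hw⟩

lemma lam_sq_bound {m : ℕ} (lam : ℝ)
    (hlam : |lam| ≤ 2 * Real.sqrt (2 * m + 1) / (m + 1)) :
    (((m:ℝ) + 1) * lam) ^ 2 ≤ 4 * ((2 * m + 1 : ℕ) : ℝ) := by
  have hm1 : (0:ℝ) < (m:ℝ) + 1 := by positivity
  have h1 : |lam| * ((m:ℝ) + 1) ≤ 2 * Real.sqrt (2 * m + 1) := by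
    have h := mul_le_mul_of_nonneg_right hlam hm1.le
    rwa [div_mul_cancel₀ _ hm1.ne'] at h
  have h2 : (|lam| * ((m:ℝ) + 1)) ^ 2 ≤ (2 * Real.sqrt (2 * m + 1)) ^ 2 := by
    apply pow_le_pow_left₀ (by positivity) h1
  have h3 : (2 * Real.sqrt (2 * m + 1)) ^ 2 = 4 * ((2 * m : ℝ) + 1) := by
    rw [mul_pow, Real.sq_sqrt (by positivity)]
    ring
  have h4 : (|lam| * ((m:ℝ) + 1)) ^ 2 = (((m:ℝ) + 1) * lam) ^ 2 := by
    rw [mul_pow, mul_pow, _root_.sq_abs]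
    ring
  rw [← h4]
  calc (|lam| * ((m:ℝ) + 1)) ^ 2 ≤ 4 * ((2 * m : ℝ) + 1) := h2.trans_eq h3
    _ = 4 * ((2 * m + 1 : ℕ) : ℝ) := by push_cast; ring
lemma exp_mul_I_inv (θ : ℝ) :
    Complex.exp ((θ:ℂ) * Complex.I) * Complex.exp (-(θ:ℂ) * Complex.I) = 1 := by
  rw [← Complex.exp_add]
  ring_nf
  exact Complex.exp_zero

lemma exp_two_mul (θ : ℝ) :
    Complex.exp (2 * (θ:ℂ) * Complex.I) = Complex.exp ((θ:ℂ) * Complex.I) ^ 2 := by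
  rw [sq, ← Complex.exp_add]
  ring_nf

lemma abs_exp_neg (θ : ℝ) : ‖Complex.exp (-(θ:ℂ) * Complex.I)‖ = 1 := by
  have : (-(θ:ℂ)) * Complex.I = ((-θ : ℝ) : ℂ) * Complex.I := by push_cast; ring
  rw [this, Complex.norm_exp_ofReal_mul_I]

lemma form_root_abs {m n : ℕ} (hm : 1 ≤ m) (hn : n = 2 * m + 1) (lam θ : ℝ)
    (hlam : |lam| ≤ 2 * Real.sqrt (2 * m + 1) / (m + 1)) {w : ℂ}
    (hw : ((2 * m + 1 : ℕ) : ℂ) * w ^ (2 * m) +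
      ((m + 1 : ℕ) : ℂ) * ((lam : ℂ) * Complex.exp ((θ:ℂ) * Complex.I)) * w ^ m +
      Complex.exp (2 * (θ:ℂ) * Complex.I) = 0) :
    ‖w‖ = rho n := by
  set E := Complex.exp ((θ:ℂ) * Complex.I) with hE
  set F := Complex.exp (-(θ:ℂ) * Complex.I) with hF
  have hEF : E * F = 1 := exp_mul_I_inv θ
  set v : ℂ := w ^ m * F with hv
  have hwc : ((2 * m + 1 : ℕ) : ℂ) = 2 * (m:ℂ) + 1 := by push_cast; ring
  have hmc : ((m + 1 : ℕ) : ℂ) = (m:ℂ) + 1 := by push_cast; ring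
  rw [hwc, hmc, exp_two_mul θ, ← hE] at hw
  have key : ((2 * (m:ℝ) + 1 : ℝ) : ℂ) * v ^ 2 + ((((m:ℝ) + 1) * lam : ℝ) : ℂ) * v + 1 = 0 := by
    push_cast
    rw [hv]
    linear_combination F ^ 2 * hw +
      (-((((m:ℂ) + 1) * lam) * w ^ m * F) - 1 - E * F) * hEF
  have hNpos : (0:ℝ) < 2 * (m:ℝ) + 1 := by positivity
  have hc : (((m:ℝ) + 1) * lam) ^ 2 ≤ 4 * (2 * (m:ℝ) + 1) := by
    have := lam_sq_bound lam hlam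
    calc (((m:ℝ) + 1) * lam) ^ 2 ≤ 4 * ((2 * m + 1 : ℕ) : ℝ) := this
      _ = 4 * (2 * (m:ℝ) + 1) := by push_cast; ring
  have hnsq : Complex.normSq v = 1 / (2 * (m:ℝ) + 1) := quad_normSq hNpos hc key
  have habsv : ‖v‖ = ‖w‖ ^ m := by
    rw [hv, norm_mul, norm_pow, hF, abs_exp_neg, mul_one]
  have hpow : ‖w‖ ^ (2 * m) = 1 / ((n:ℕ) : ℝ) := by
    have h1 : ‖w‖ ^ (2 * m) = (‖w‖ ^ m) ^ 2 := by
      rw [← pow_mul]; congr 1; omega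
    rw [h1, ← habsv, Complex.sq_norm, hnsq, hn]
    push_cast
    ring_nf
  exact abs_eq_rho_of_pow hm hn (norm_nonneg w) hpow

lemma form_critDist {m n : ℕ} (hm : 1 ≤ m) (hn : n = 2 * m + 1) (lam θ : ℝ)
    (hlam : |lam| ≤ 2 * Real.sqrt (2 * m + 1) / (m + 1)) :
    critDist (X ^ (2 * m + 1) + C ((lam : ℂ) * Complex.exp ((θ:ℂ) * Complex.I)) * X ^ (m + 1) +
      C (Complex.exp (2 * (θ:ℂ) * Complex.I)) * X) 0 = rho n := by
  apply critDist_eq_of_const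
  · exact form_deriv_exists_root m hm _ _
  · intro w hw
    rw [form_eval] at hw
    exact form_root_abs hm hn lam θ hlam hw
lemma reconstruct {m n : ℕ} (hm : 1 ≤ m) (hn : n = 2 * m + 1) {p : Polynomial ℂ}
    (hmo : p.Monic) (hdeg : p.natDegree = n) (h00 : p.coeff 0 = 0)
    (hz : ∀ j, 2 ≤ j → j ≤ 2 * m → j ≠ m + 1 → p.coeff j = 0) :
    p = X ^ (2 * m + 1) + C (p.coeff (m + 1)) * X ^ (m + 1) + C (p.coeff 1) * X := by
  have htop : p.coeff (2 * m + 1) = 1 := by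
    rw [← hn, ← hdeg]; exact hmo.coeff_natDegree
  ext k
  simp only [Polynomial.coeff_add, Polynomial.coeff_C_mul, Polynomial.coeff_X_pow,
    Polynomial.coeff_X]
  by_cases hk0 : k = 0
  · subst hk0
    simp only [if_neg (by omega : ¬ (0 = 2 * m + 1)), if_neg (by omega : ¬ (0 = m + 1)),
      if_neg (by omega : ¬ (1 = 0))]
    rw [h00]; ring
  by_cases hk1 : k = 1
  · subst hk1
    simp only [if_neg (by omega : ¬ (1 = 2 * m + 1)), if_neg (by omega : ¬ (1 = m + 1)),
      if_pos rfl]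
    simp
  by_cases hkm : k = m + 1
  · subst hkm
    simp only [if_neg (by omega : ¬ (m + 1 = 2 * m + 1)), if_pos rfl,
      if_neg (by omega : ¬ (1 = m + 1))]
    simp
  by_cases hkn : k = 2 * m + 1
  · subst hkn
    simp only [if_pos rfl, if_neg (by omega : ¬ (2 * m + 1 = m + 1)),
      if_neg (by omega : ¬ (1 = 2 * m + 1))]
    rw [htop]; simp
  · simp only [if_neg (by omega : ¬ k = 2 * m + 1), if_neg (by omega : ¬ k = m + 1),
      if_neg (by omega : ¬ (1 : ℕ) = k)]
    by_cases hkbig : 2 * m + 1 < k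
    · rw [Polynomial.coeff_eq_zero_of_natDegree_lt (by omega : p.natDegree < k)]
      simp
    · rw [hz k (by omega) (by omega) hkm]
      simp
lemma eq_case {m n : ℕ} (hm : 1 ≤ m) (hn : n = 2 * m + 1) {p : Polynomial ℂ}
    (hp : p ∈ Sset n) (h0 : p.eval 0 = 0) (hcd : critDist p 0 = rho n) :
    ∃ A B : ℂ, p = X ^ (2 * m + 1) + C A * X ^ (m + 1) + C B * X ∧
      B * (starRingEnd ℂ) B = 1 ∧ A = B * (starRingEnd ℂ) A ∧
      (∀ w : ℂ, (Polynomial.derivative p).eval w = 0 → ‖w‖ = rho n) := by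
  have hn2 : 2 ≤ n := by omega
  have hrho : 0 < rho n := rho_pos hn2
  have hmo := hp.1
  have hdeg := hp.2.1
  obtain ⟨hddeg, hdcoeff, hdne⟩ := deriv_facts hmo hdeg (by omega) (p := p)
  have hd2m : (Polynomial.derivative p).natDegree = 2 * m := by omega
  obtain ⟨s, hs, hsmo, hsdeg, heval⟩ := factor_X hmo hdeg (by omega) h0
  have hs2m : s.natDegree = 2 * m := by omega
  have hnR : (0:ℝ) < n := by positivity
  -- lower bounds on critical point moduli
  have hgeW : ∀ w ∈ (Polynomial.derivative p).roots, rho n ≤ ‖w‖ := by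
    intro w hw
    have := critDist_le p (Polynomial.mem_roots'.mp hw).2
    rw [hcd] at this
    exact this
  -- product identities
  have hcardW : Multiset.card (((Polynomial.derivative p).roots).map (fun z => ‖z‖)) = 2 * m := by
    rw [Multiset.card_map, card_roots_eq hdne]; omega
  have hallLeW : ∀ x ∈ ((Polynomial.derivative p).roots).map (fun z => ‖z‖), rho n ≤ x := by
    intro x hx
    rw [Multiset.mem_map] at hx
    obtain ⟨w, hw, rfl⟩ := hx
    exact hgeW w hw
  have hgeProd : (rho n) ^ (2 * m) ≤ (((Polynomial.derivative p).roots).map (fun z => ‖z‖)).prod := by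
    have := ms_prod_ge (rho n) hrho _ hallLeW
    rwa [hcardW] at this
  have hlc : (Polynomial.derivative p).leadingCoeff = (n : ℂ) := by
    rw [Polynomial.leadingCoeff, hddeg]; exact hdcoeff
  have habs0 : ‖(Polynomial.derivative p).eval 0‖ =
      (n : ℝ) * (((Polynomial.derivative p).roots).map (fun z => ‖z‖)).prod := by
    rw [abs_eval_zero_general hdne, hlc, Complex.norm_natCast]
  have hZbound : ∀ x ∈ s.roots.map (fun z => ‖z‖), 0 ≤ x ∧ x ≤ 1 := by
    intro x hx
    rw [Multiset.mem_map] at hx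
    obtain ⟨z, hz, rfl⟩ := hx
    exact ⟨norm_nonneg z, s_roots_abs hp hs z hz⟩
  have hsabs : ‖s.eval 0‖ = (s.roots.map (fun z => ‖z‖)).prod :=
    abs_eval_zero_monic hsmo
  have hZle : (s.roots.map (fun z => ‖z‖)).prod ≤ 1 := ms_prod_le_one _ hZbound
  have hrpow : (rho n) ^ (2*m) = 1 / n := rho_pow hm hn
  -- pinch
  have hge1 : (1:ℝ) ≤ (n : ℝ) * (((Polynomial.derivative p).roots).map (fun z => ‖z‖)).prod := by
    calc (1:ℝ) = (n:ℝ) * (1 / n) := by field_simp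
      _ ≤ (n:ℝ) * (((Polynomial.derivative p).roots).map (fun z => ‖z‖)).prod := by
          apply mul_le_mul_of_nonneg_left _ hnR.le
          rw [← hrpow]; exact hgeProd
  have hle1 : (n : ℝ) * (((Polynomial.derivative p).roots).map (fun z => ‖z‖)).prod ≤ 1 := by
    rw [← habs0, heval, hsabs]
    exact hZle
  have hprodW : (((Polynomial.derivative p).roots).map (fun z => ‖z‖)).prod = (rho n) ^ (2*m) := by
    rw [hrpow]
    have h1 : (n : ℝ) * (((Polynomial.derivative p).roots).map (fun z => ‖z‖)).prod = 1 :=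
      le_antisymm hle1 hge1
    field_simp at h1 ⊢
    linarith [h1]
  have hprodZ : (s.roots.map (fun z => ‖z‖)).prod = 1 := by
    have : (n : ℝ) * (((Polynomial.derivative p).roots).map (fun z => ‖z‖)).prod = 1 :=
      le_antisymm hle1 hge1
    rw [← habs0, heval, hsabs] at this
    exact this
  -- equality cases
  have hallW : ∀ w ∈ (Polynomial.derivative p).roots, ‖w‖ = rho n := by
    intro w hw
    have := ms_prod_eq_forall (rho n) hrho _ hallLeW (by rw [hcardW, hprodW])
    exact this _ (Multiset.mem_map_of_mem _ hw)
  have hallZ : ∀ z ∈ s.roots, ‖z‖ = 1 := by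
    intro z hz
    have := ms_prod_eq_one_forall _ hZbound hprodZ
    exact this _ (Multiset.mem_map_of_mem _ hz)
  -- reflection for s
  have hcardS : Multiset.card s.roots = 2 * m := by
    rw [card_roots_eq hsmo.ne_zero]; omega
  have hrefS : ∀ k, k ≤ 2 * m → s.coeff k = s.coeff 0 * (starRingEnd ℂ) (s.coeff (2*m - k)) := by
    intro k hk
    have := coeff_reflect 1 one_pos s.roots hallZ k (by rw [hcardS]; exact hk)
    rw [monic_eq_prod hsmo, hcardS] at this
    simpa using this
  have hScoeff : ∀ k, s.coeff k = p.coeff (k+1) := by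
    intro k
    rw [hs, Polynomial.coeff_X_mul]
  have hstop : s.coeff (2*m) = 1 := by
    rw [← hs2m]; exact hsmo.coeff_natDegree
  have hA1 : p.coeff 1 * (starRingEnd ℂ) (p.coeff 1) = 1 := by
    have := hrefS (2*m) le_rfl
    rw [hstop, Nat.sub_self, hScoeff 0] at this
    exact this.symm
  -- reflection for derivative
  set P : Polynomial ℂ := (((Polynomial.derivative p).roots).map fun a => X - C a).prod with hP
  have hsplit : C ((n:ℂ)) * P = Polynomial.derivative p := by
    have := Polynomial.C_leadingCoeff_mul_prod_multiset_X_sub_C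
      (p := Polynomial.derivative p) (by rw [card_roots_eq hdne])
    rw [hlc] at this
    exact this
  have hDcoeff : ∀ i, (Polynomial.derivative p).coeff i = (n:ℂ) * P.coeff i := by
    intro i
    rw [← hsplit, Polynomial.coeff_C_mul]
  have hPmono : P.Monic := prodXC_monic _
  have hcardP : Multiset.card ((Polynomial.derivative p).roots) = 2 * m := by
    rw [card_roots_eq hdne]; omega
  have hrefD : ∀ k, k ≤ 2 * m →
      (((rho n : ℝ) : ℂ) ^ 2) ^ k * (Polynomial.derivative p).coeff k * (n:ℂ) =
        (Polynomial.derivative p).coeff 0 *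
          (starRingEnd ℂ) ((Polynomial.derivative p).coeff (2*m - k)) := by
    intro k hk
    have href := coeff_reflect (rho n) hrho ((Polynomial.derivative p).roots) hallW k
      (by rw [hcardP]; exact hk)
    rw [hcardP] at href
    rw [hDcoeff k, hDcoeff 0, hDcoeff (2*m - k), map_mul, map_natCast]
    linear_combination ((n:ℂ))^2 * href
  -- kill middle coefficients
  have hzero : ∀ j, 2 ≤ j → j ≤ 2 * m → j ≠ m + 1 → p.coeff j = 0 := by
    intro j hj2 hjle hjm
    have hk1 : (j - 1) + 1 = j := by omega
    have hkle : j - 1 ≤ 2*m := by omega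
    have h2mk : 2*m - (j-1) + 1 = n + 1 - j := by omega
    have hD := hrefD (j-1) hkle
    rw [Polynomial.coeff_derivative, Polynomial.coeff_derivative, Polynomial.coeff_derivative,
      hk1, h2mk] at hD
    -- conj expansion
    rw [map_mul] at hD
    have hcast1 : ((j - 1 : ℕ) : ℂ) + 1 = (j : ℂ) := by
      have : ((j - 1 : ℕ) : ℂ) = (j : ℂ) - 1 := by
        push_cast [Nat.cast_sub (by omega : 1 ≤ j)]
        ring
      rw [this]; ring
    have hcast2 : ((2*m - (j-1) : ℕ) : ℂ) + 1 = ((n + 1 - j : ℕ) : ℂ) := by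
      have h1 : (2*m - (j-1)) + 1 = n + 1 - j := h2mk
      have : ((2*m - (j-1) : ℕ) : ℂ) + 1 = (((2*m - (j-1)) + 1 : ℕ) : ℂ) := by push_cast; ring
      rw [this, h1]
    have hconjcast : (starRingEnd ℂ) (((2*m - (j-1) : ℕ) : ℂ) + 1) = ((n + 1 - j : ℕ) : ℂ) := by
      rw [map_add, map_natCast, map_one, hcast2]
    rw [hconjcast, hcast1] at hD
    simp only [Nat.cast_zero, zero_add, Nat.cast_ofNat] at hD
    -- hD : R^(j-1) * (p.coeff j * j) * n = p.coeff 1 * (0+1) * (conj (p.coeff (n+1-j)) * (n+1-j))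
    have hSrel : p.coeff j = p.coeff 1 * (starRingEnd ℂ) (p.coeff (n + 1 - j)) := by
      have := hrefS (j-1) hkle
      rw [hScoeff (j-1), hScoeff (2*m - (j-1)), hScoeff 0, hk1] at this
      have hidx : 2*m - (j-1) + 1 = n + 1 - j := h2mk
      rw [hidx] at this
      norm_num at this
      exact this
    have hconj2 : (starRingEnd ℂ) (p.coeff (n + 1 - j)) =
        (starRingEnd ℂ) (p.coeff 1) * p.coeff j := by
      have h := congrArg (fun z => (starRingEnd ℂ) (p.coeff 1) * z) hSrel
      calc (starRingEnd ℂ) (p.coeff (n + 1 - j))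
          = (p.coeff 1 * (starRingEnd ℂ) (p.coeff 1)) * (starRingEnd ℂ) (p.coeff (n + 1 - j)) := by
            rw [hA1, one_mul]
        _ = (starRingEnd ℂ) (p.coeff 1) * (p.coeff 1 * (starRingEnd ℂ) (p.coeff (n+1-j))) := by ring
        _ = (starRingEnd ℂ) (p.coeff 1) * p.coeff j := by rw [← hSrel]
    have hmain : ((n:ℂ) * (((rho n : ℝ) : ℂ) ^ 2) ^ (j-1) * (j:ℂ) - ((n + 1 - j : ℕ) : ℂ)) *
        p.coeff j = 0 := by
      linear_combination hD + (p.coeff 1 * ((n + 1 - j : ℕ) : ℂ)) * hconj2 +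
        (((n + 1 - j : ℕ) : ℂ) * p.coeff j) * hA1
    rcases mul_eq_zero.mp hmain with hfac | hzero
    · exfalso
      have hreal : ((rho n) ^ 2) ^ (j-1) * (j:ℝ) * (n:ℝ) = ((n + 1 - j : ℕ) : ℝ) := by
        have := sub_eq_zero.mp hfac
        have hcx : (((((rho n) ^ 2) ^ (j-1) * (j:ℝ) * (n:ℝ)) : ℝ) : ℂ) = (((n + 1 - j : ℕ) : ℝ) : ℂ) := by
          push_cast
          rw [← this]
          ring
        exact_mod_cast hcx
      have hkey := key_ne m hm j hj2 hjle hjm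
      rw [hn] at hreal
      apply hkey
      rw [hreal]
      have : ((2*m + 1 + 1 - j : ℕ) : ℝ) = ((2 * m + 1 : ℕ) : ℝ) + 1 - (j : ℝ) := by
        push_cast [Nat.cast_sub (by omega : j ≤ 2*m+1+1)]
        ring
      rw [← this]
    · exact hzero
  -- reconstruct
  have h00 : p.coeff 0 = 0 := by rw [Polynomial.coeff_zero_eq_eval_zero]; exact h0
  have hform := reconstruct hm hn hmo hdeg h00 hzero
  refine ⟨p.coeff (m+1), p.coeff 1, hform, ?_, ?_, ?_⟩
  · exact hA1
  · have := hrefS m (by omega)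
    rw [hScoeff m, hScoeff (2*m - m), hScoeff 0] at this
    have hidx : 2*m - m + 1 = m + 1 := by omega
    rw [hidx] at this
    exact this
  · intro w hw
    exact hallW w (Polynomial.mem_roots'.mpr ⟨hdne, hw⟩)
lemma structure_to_form {m n : ℕ} (hm : 1 ≤ m) (hn : n = 2 * m + 1) {p : Polynomial ℂ} {A B : ℂ}
    (hform : p = X ^ (2 * m + 1) + C A * X ^ (m + 1) + C B * X)
    (hB : B * (starRingEnd ℂ) B = 1) (hA : A = B * (starRingEnd ℂ) A)
    (hroots : ∀ w : ℂ, (Polynomial.derivative p).eval w = 0 → ‖w‖ = rho n) :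
    ∃ (lam θ : ℝ), |lam| ≤ 2 * Real.sqrt (2 * m + 1) / (m + 1) ∧
      p = X ^ (2 * m + 1) + C ((lam : ℂ) * Complex.exp ((θ:ℂ) * Complex.I)) * X ^ (m + 1) +
        C (Complex.exp (2 * (θ:ℂ) * Complex.I)) * X := by
  have hn2 : 2 ≤ n := by omega
  have hrho : 0 < rho n := rho_pos hn2
  have hnormB : Complex.normSq B = 1 := by
    have h := hB
    rw [Complex.mul_conj] at h
    exact_mod_cast h
  have habsB : ‖B‖ = 1 := by
    rw [Complex.norm_def, hnormB, Real.sqrt_one]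
  set θ : ℝ := B.arg / 2 with hθ
  have hBe : Complex.exp (2 * (θ:ℂ) * Complex.I) = B := by
    have h2θ : 2 * (θ:ℂ) = (B.arg : ℂ) := by rw [hθ]; push_cast; ring
    rw [h2θ]
    have := Complex.norm_mul_exp_arg_mul_I B
    rw [habsB] at this
    simpa using this
  set E : ℂ := Complex.exp ((θ:ℂ) * Complex.I) with hE
  set F : ℂ := Complex.exp (-(θ:ℂ) * Complex.I) with hF
  have hEF : E * F = 1 := exp_mul_I_inv θ
  have hE2 : E ^ 2 = B := by rw [← exp_two_mul θ, hBe]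
  have hconjF : (starRingEnd ℂ) F = E := by
    rw [hF, ← Complex.exp_conj]
    congr 1
    simp [Complex.conj_I]
  have hB'real : A * F = (starRingEnd ℂ) (A * F) := by
    rw [map_mul, hconjF]
    calc A * F = (B * (starRingEnd ℂ) A) * F := by rw [← hA]
      _ = (E^2 * (starRingEnd ℂ) A) * F := by rw [hE2]
      _ = ((starRingEnd ℂ) A * E) * (E * F) := by ring
      _ = (starRingEnd ℂ) A * E := by rw [hEF, mul_one]
  set lam : ℝ := (A * F).re with hlamdef
  have hB'eq : A * F = (lam : ℂ) := by
    have := Complex.conj_eq_iff_re.mp hB'real.symm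
    exact this.symm
  have hAeq : A = (lam : ℂ) * E := by
    calc A = A * (F * E) := by rw [mul_comm F E, hEF, mul_one]
      _ = (A * F) * E := by ring
      _ = (lam : ℂ) * E := by rw [hB'eq]
  -- bound on lam
  obtain ⟨w, hw⟩ := form_deriv_exists_root m hm A B
  have hwroot : (Polynomial.derivative p).eval w = 0 := by rw [hform]; exact hw
  have habsw : ‖w‖ = rho n := hroots w hwroot
  have hwE : ((2 * m + 1 : ℕ) : ℂ) * w ^ (2 * m) + ((m + 1 : ℕ) : ℂ) * A * w ^ m + B = 0 := by
    rw [form_eval] at hw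
    exact hw
  set v : ℂ := w ^ m * F with hv
  have key : ((n : ℕ) : ℂ) * v ^ 2 + ((((m:ℝ) + 1) * lam : ℝ) : ℂ) * v + 1 = 0 := by
    rw [hAeq, ← hE2] at hwE
    have hwc : ((2 * m + 1 : ℕ) : ℂ) = ((n : ℕ) : ℂ) := by rw [hn]
    have hmc : ((m + 1 : ℕ) : ℂ) = (m : ℂ) + 1 := by push_cast; ring
    rw [hwc, hmc] at hwE
    push_cast
    rw [hv]
    linear_combination F ^ 2 * hwE +
      (-((((m:ℂ) + 1) * lam) * w ^ m * F) - 1 - E * F) * hEF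
  have habsF : ‖F‖ = 1 := abs_exp_neg θ
  have habsv : ‖v‖ = (rho n) ^ m := by
    rw [hv, norm_mul, norm_pow, habsF, mul_one, habsw]
  have hnR : (0:ℝ) < n := by positivity
  have hsq : ((rho n) ^ m) ^ 2 = 1 / n := by
    rw [← pow_mul]
    have : m * 2 = 2 * m := by omega
    rw [this]
    exact rho_pow hm hn
  -- |c| * |v| <= n |v|^2 + 1 = 2
  have hcv : (((m:ℝ) + 1) * |lam|) * ‖v‖ ≤ 2 := by
    have h1 : ((((m:ℝ) + 1) * lam : ℝ) : ℂ) * v = -(((n : ℕ) : ℂ) * v ^ 2 + 1) := by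
      linear_combination key
    have h2 := congrArg norm h1
    rw [norm_mul, Complex.norm_real, Real.norm_eq_abs, norm_neg] at h2
    have h3 : ‖((n : ℕ) : ℂ) * v ^ 2 + 1‖ ≤ (n : ℝ) * (‖v‖) ^ 2 + 1 := by
      calc ‖((n : ℕ) : ℂ) * v ^ 2 + 1‖
          ≤ ‖((n : ℕ) : ℂ) * v ^ 2‖ + ‖1‖ := norm_add_le _ _
        _ = (n : ℝ) * (‖v‖) ^ 2 + 1 := by
            rw [norm_mul, norm_pow, Complex.norm_natCast, norm_one]
      
    have h4 : |((m:ℝ) + 1) * lam| = ((m:ℝ) + 1) * |lam| := by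
      rw [abs_mul, _root_.abs_of_nonneg (by positivity : (0:ℝ) ≤ (m:ℝ) + 1)]
    rw [h4] at h2
    calc (((m:ℝ) + 1) * |lam|) * ‖v‖ ≤ (n : ℝ) * (‖v‖) ^ 2 + 1 :=
        h2.le.trans h3
      _ = 2 := by rw [habsv, hsq]; field_simp; norm_num
  have hs : (0:ℝ) < Real.sqrt n := Real.sqrt_pos.mpr hnR
  have hsρ : Real.sqrt n * (rho n) ^ m = 1 := by
    have h1 : (Real.sqrt n * (rho n) ^ m) ^ 2 = 1 := by
      rw [mul_pow, Real.sq_sqrt hnR.le, hsq]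
      field_simp
    have h2 : (0:ℝ) ≤ Real.sqrt n * (rho n) ^ m := by positivity
    calc Real.sqrt n * (rho n) ^ m = Real.sqrt ((Real.sqrt n * (rho n) ^ m) ^ 2) := by
          rw [Real.sqrt_sq h2]
      _ = 1 := by rw [h1, Real.sqrt_one]
  have hbound : ((m:ℝ) + 1) * |lam| ≤ 2 * Real.sqrt n := by
    rw [habsv] at hcv
    nlinarith [mul_le_mul_of_nonneg_left hcv hs.le, hsρ]
  have hfinal : |lam| ≤ 2 * Real.sqrt (2 * m + 1) / (m + 1) := by
    have hsqrt : Real.sqrt (2 * (m:ℝ) + 1) = Real.sqrt n := by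
      congr 1
      rw [hn]; push_cast; ring
    rw [hsqrt, le_div_iff₀ (by positivity : (0:ℝ) < (m:ℝ) + 1)]
    nlinarith [hbound]
  exact ⟨lam, θ, hfinal, by rw [hform, hAeq, ← hBe, hE]⟩
lemma pow_eq_one_real {t : ℝ} (ht : 0 ≤ t) {k : ℕ} (hk : k ≠ 0) (h : t ^ k = 1) : t = 1 := by
  have hkR : ((k:ℕ) : ℝ) ≠ 0 := Nat.cast_ne_zero.mpr hk
  have : t = (t ^ k : ℝ) ^ ((1:ℝ)/(k : ℕ)) := by
    rw [← Real.rpow_natCast t k, ← Real.rpow_mul ht]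
    rw [mul_one_div, div_self hkR, Real.rpow_one]
  rw [this, h, Real.one_rpow]

lemma q0_mem {m n : ℕ} (hm : 1 ≤ m) (hn : n = 2 * m + 1) :
    (X ^ (2 * m + 1) + X : Polynomial ℂ) ∈ Sset n ∧
      (X ^ (2 * m + 1) + X : Polynomial ℂ).eval 0 = 0 := by
  have hdX : (X : Polynomial ℂ).degree < (2 * m + 1 : ℕ) := by
    rw [Polynomial.degree_X]
    exact_mod_cast (by omega : 1 < 2 * m + 1)
  have hmon : (X ^ (2 * m + 1) + X : Polynomial ℂ).Monic := Polynomial.monic_X_pow_add hdX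
  have hdeg : (X ^ (2 * m + 1) + X : Polynomial ℂ).natDegree = n := by
    have h1 : (X ^ (2 * m + 1) + X : Polynomial ℂ).degree = (2 * m + 1 : ℕ) := by
      rw [Polynomial.degree_add_eq_left_of_degree_lt (by rw [Polynomial.degree_X_pow]; exact hdX),
        Polynomial.degree_X_pow]
    rw [Polynomial.natDegree, h1, hn]
    rfl
  refine ⟨⟨hmon, hdeg, ?_⟩, by simp⟩
  intro z hz
  simp only [Polynomial.eval_add, Polynomial.eval_pow, Polynomial.eval_X] at hz
  by_cases hz0 : z = 0
  · rw [hz0]; simp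
  · have hfac : z * (z ^ (2 * m) + 1) = 0 := by linear_combination hz
    have h2 : z ^ (2 * m) = -1 := by
      rcases mul_eq_zero.mp hfac with h | h
      · exact absurd h hz0
      · linear_combination h
    have habs : ‖z‖ ^ (2 * m) = 1 := by
      rw [← norm_pow, h2]
      simp
    have := pow_eq_one_real (norm_nonneg z) (by omega : 2 * m ≠ 0) habs
    exact this.le

lemma q0_eq_form (m : ℕ) :
    (X ^ (2 * m + 1) + X : Polynomial ℂ) =
      X ^ (2 * m + 1) + C (((0:ℝ) : ℂ) * Complex.exp (((0:ℝ):ℂ) * Complex.I)) * X ^ (m + 1) +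
        C (Complex.exp (2 * ((0:ℝ):ℂ) * Complex.I)) * X := by
  simp
/-- For `n = 2m+1`, `m ≥ 1`, and `p ∈ S(n,0)`: `|p|₀ = (1/n)^{1/(n-1)}` iff
`p(z) = z^{2m+1} + λ e^{iθ} z^{m+1} + e^{2iθ} z` for some real `λ, θ` with
`|λ| ≤ 2√(2m+1)/(m+1)`; consequently the `0`-maximal polynomials of odd degree `n = 2m+1`
are exactly these polynomials. -/
theorem stmt_5 (m : ℕ) (hm : 1 ≤ m) (n : ℕ) (hn : n = 2 * m + 1)
    (p : Polynomial ℂ) (hp : p ∈ Sset n) (h0 : p.eval 0 = 0) :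
    (critDist p 0 = ((1 : ℝ) / n) ^ ((1 : ℝ) / ((n : ℝ) - 1)) ↔
      ∃ (lam θ : ℝ), |lam| ≤ 2 * Real.sqrt (2 * m + 1) / (m + 1) ∧
        p = X ^ (2 * m + 1) + C ((lam : ℂ) * Complex.exp (θ * Complex.I)) * X ^ (m + 1) +
          C (Complex.exp (2 * θ * Complex.I)) * X) ∧
    ((∀ q ∈ Sset n, q.eval 0 = 0 → critDist q 0 ≤ critDist p 0) ↔
      ∃ (lam θ : ℝ), |lam| ≤ 2 * Real.sqrt (2 * m + 1) / (m + 1) ∧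
        p = X ^ (2 * m + 1) + C ((lam : ℂ) * Complex.exp (θ * Complex.I)) * X ^ (m + 1) +
          C (Complex.exp (2 * θ * Complex.I)) * X) := by
  have hρ : ((1 : ℝ) / n) ^ ((1 : ℝ) / ((n : ℝ) - 1)) = rho n := rfl
  have h1 : critDist p 0 = rho n ↔
      ∃ (lam θ : ℝ), |lam| ≤ 2 * Real.sqrt (2 * m + 1) / (m + 1) ∧
        p = X ^ (2 * m + 1) + C ((lam : ℂ) * Complex.exp (θ * Complex.I)) * X ^ (m + 1) +
          C (Complex.exp (2 * θ * Complex.I)) * X := by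
    constructor
    · intro hcd
      obtain ⟨A, B, hform, hB, hA, hroots⟩ := eq_case hm hn hp h0 hcd
      exact structure_to_form hm hn hform hB hA hroots
    · rintro ⟨lam, θ, hlam, hform⟩
      rw [hform]
      exact form_critDist hm hn lam θ hlam
  refine ⟨hρ ▸ h1, ?_, ?_⟩
  · intro hmax
    apply h1.mp
    have hle : critDist p 0 ≤ rho n := critDist_le_rho hm hn hp h0
    obtain ⟨hq0mem, hq0eval⟩ := q0_mem (n := n) hm hn
    have hq0cd : critDist (X ^ (2 * m + 1) + X : Polynomial ℂ) 0 = rho n := by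
      rw [q0_eq_form m]
      exact form_critDist hm hn 0 0 (by simp; positivity)
    have hge : rho n ≤ critDist p 0 := by
      rw [← hq0cd]
      exact hmax _ hq0mem hq0eval
    exact le_antisymm hle hge
  · rintro ⟨lam, θ, hlam, hform⟩ q hq hq0
    have hpcd : critDist p 0 = rho n := by
      rw [hform]
      exact form_critDist hm hn lam θ hlam
    rw [hpcd]
    exact critDist_le_rho hm hn hq hq0
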